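/- arXiv:1311.3929 — 3 statements merged into one kernel-verified Lean document; each statement's English description precedes it below -/
import Mathlib

section
/- Let X be a connected simple graph with capacity function c assigning a positive integer to each edge, let A be an m-thin cut and B an n-thin cut, and suppose A and B are not nested. Then there exist A' ∈ {A, A*} and B' ∈ {B, B*} such that A'∩(B')* is an m-thin cut and (A')*∩B' is an n-thin cut. -/
open Classical

/-- The set of edges of `G` with one endpoint in `A` and one in the complement of `A`. -/
def cutEdges {V : Type*} (G : SimpleGraph V) (A : Set V) : Set (Sym2 V) :=
  {e | e ∈ G.edgeSet ∧ ∃ u v, e = s(u, v) ∧ u ∈ A ∧ v ∉ A}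

/-- The capacity of a cut: the sum of the capacities of the edges across it. -/
noncomputable def cutCap {V : Type*} (G : SimpleGraph V) (c : Sym2 V → ℕ) (A : Set V) : ℕ :=
  ∑ᶠ e ∈ cutEdges G A, c e

/-- A cut: a nonempty proper subset of the vertices with finite edge boundary. -/
def IsCut {V : Type*} (G : SimpleGraph V) (A : Set V) : Prop :=
  A ≠ ∅ ∧ A ≠ Set.univ ∧ (cutEdges G A).Finite

/-- Two subsets of `V` are nested if at least one of the four corners is empty. -/
def Nested {V : Type*} (A B : Set V) : Prop :=
  A ∩ B = ∅ ∨ A ∩ Bᶜ = ∅ ∨ Aᶜ ∩ B = ∅ ∨ Aᶜ ∩ Bᶜ = ∅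

/-- Membership in the Boolean subalgebra of `Set V` generated by a family `F`:
the smallest family containing `F`, `∅` and `univ`, closed under union,
intersection and complement. -/
inductive BoolGen {V : Type*} (F : Set (Set V)) : Set V → Prop
  | base {A : Set V} : A ∈ F → BoolGen F A
  | empty : BoolGen F ∅
  | univ : BoolGen F Set.univ
  | union {A B : Set V} : BoolGen F A → BoolGen F B → BoolGen F (A ∪ B)
  | inter {A B : Set V} : BoolGen F A → BoolGen F B → BoolGen F (A ∩ B)
  | compl {A : Set V} : BoolGen F A → BoolGen F Aᶜ

/-- A cut is `n`-thin if it has capacity `n` and does not belong to the Boolean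
subalgebra `B_{n-1}` generated by the cuts of capacity at most `n - 1`. -/
def IsThin {V : Type*} (G : SimpleGraph V) (c : Sym2 V → ℕ) (n : ℕ) (A : Set V) : Prop :=
  IsCut G A ∧ cutCap G c A = n ∧
    ¬ BoolGen {B | IsCut G B ∧ cutCap G c B ≤ n - 1} A

section Aux
variable {V : Type*} (G : SimpleGraph V) (c : Sym2 V → ℕ)

lemma mem_cutEdges_iff (S : Set V) (a b : V) :
    s(a, b) ∈ cutEdges G S ↔ s(a, b) ∈ G.edgeSet ∧ ((a ∈ S ∧ b ∉ S) ∨ (b ∈ S ∧ a ∉ S)) := by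
  constructor
  · rintro ⟨he, u, v, huv, hu, hv⟩
    refine ⟨he, ?_⟩
    rw [Sym2.eq_iff] at huv
    rcases huv with ⟨rfl, rfl⟩ | ⟨rfl, rfl⟩
    · exact Or.inl ⟨hu, hv⟩
    · exact Or.inr ⟨hu, hv⟩
  · rintro ⟨he, ⟨ha, hb⟩ | ⟨hb, ha⟩⟩
    · exact ⟨he, a, b, rfl, ha, hb⟩
    · exact ⟨he, b, a, Sym2.eq_swap.symm, hb, ha⟩

lemma cutEdges_compl (S : Set V) : cutEdges G Sᶜ = cutEdges G S := by
  ext e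
  induction e using Sym2.inductionOn with
  | hf a b =>
    simp only [mem_cutEdges_iff, Set.mem_compl_iff, not_not]
    tauto

lemma cutCap_compl (S : Set V) : cutCap G c Sᶜ = cutCap G c S := by
  unfold cutCap; rw [cutEdges_compl]

lemma cutEdges_corner_subset (S T : Set V) :
    cutEdges G (S ∩ Tᶜ) ⊆ cutEdges G S ∪ cutEdges G T := by
  intro e
  induction e using Sym2.inductionOn with
  | hf a b =>
    simp only [mem_cutEdges_iff, Set.mem_union, Set.mem_inter_iff, Set.mem_compl_iff]
    tauto

lemma cutEdges_corner_subset' (S T : Set V) :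
    cutEdges G (Sᶜ ∩ T) ⊆ cutEdges G S ∪ cutEdges G T := by
  intro e
  induction e using Sym2.inductionOn with
  | hf a b =>
    simp only [mem_cutEdges_iff, Set.mem_union, Set.mem_inter_iff, Set.mem_compl_iff]
    tauto

lemma cutCap_eq_sum {X : Set V} (s : Finset (Sym2 V)) (hX : cutEdges G X ⊆ ↑s) :
    cutCap G c X = ∑ e ∈ s, if e ∈ cutEdges G X then c e else 0 := by
  classical
  have h1 : cutEdges G X = ↑(s.filter (· ∈ cutEdges G X)) := by
    ext e
    simp only [Finset.coe_filter, Set.mem_setOf_eq]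
    exact ⟨fun h => ⟨hX h, h⟩, fun h => h.2⟩
  have h2 : cutCap G c X = ∑ e ∈ s.filter (· ∈ cutEdges G X), c e := by
    conv_lhs => rw [cutCap, h1]
    exact finsum_mem_coe_finset _ _
  rw [h2, Finset.sum_filter]

lemma cutCap_submod (S T : Set V) (hS : (cutEdges G S).Finite) (hT : (cutEdges G T).Finite) :
    cutCap G c (S ∩ Tᶜ) + cutCap G c (Sᶜ ∩ T) ≤ cutCap G c S + cutCap G c T := by
  classical
  set s := (hS.union hT).toFinset with hs
  have hcoe : ↑s = cutEdges G S ∪ cutEdges G T := Set.Finite.coe_toFinset _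
  have h1 : cutEdges G (S ∩ Tᶜ) ⊆ ↑s := by rw [hcoe]; exact cutEdges_corner_subset G S T
  have h2 : cutEdges G (Sᶜ ∩ T) ⊆ ↑s := by rw [hcoe]; exact cutEdges_corner_subset' G S T
  have h3 : cutEdges G S ⊆ ↑s := by rw [hcoe]; exact Set.subset_union_left
  have h4 : cutEdges G T ⊆ ↑s := by rw [hcoe]; exact Set.subset_union_right
  rw [cutCap_eq_sum G c s h1, cutCap_eq_sum G c s h2, cutCap_eq_sum G c s h3,
    cutCap_eq_sum G c s h4, ← Finset.sum_add_distrib, ← Finset.sum_add_distrib]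
  apply Finset.sum_le_sum
  intro e he
  have heE : e ∈ G.edgeSet := by
    rw [hs, Set.Finite.mem_toFinset] at he
    rcases he with h | h
    · exact h.1
    · exact h.1
  clear he
  revert heE
  induction e using Sym2.inductionOn with
  | hf a b =>
    intro heE
    simp only [mem_cutEdges_iff, heE, true_and, Set.mem_inter_iff, Set.mem_compl_iff, not_not]
    by_cases hSa : a ∈ S <;> by_cases hSb : b ∈ S <;> by_cases hTa : a ∈ T <;>
      by_cases hTb : b ∈ T <;> simp [hSa, hSb, hTa, hTb] <;> omega

end Aux

section Key
variable {V : Type*}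

lemma key_pair (G : SimpleGraph V) (c : Sym2 V → ℕ) (m n : ℕ) (S T : Set V)
    (hSfin : (cutEdges G S).Finite) (hTfin : (cutEdges G T).Finite)
    (hScap : cutCap G c S = m) (hTcap : cutCap G c T = n)
    (hPne : (S ∩ Tᶜ).Nonempty) (hQne : (Sᶜ ∩ T).Nonempty)
    (hP : ¬ BoolGen {B | IsCut G B ∧ cutCap G c B ≤ m - 1} (S ∩ Tᶜ))
    (hQ : ¬ BoolGen {B | IsCut G B ∧ cutCap G c B ≤ n - 1} (Sᶜ ∩ T)) :
    IsThin G c m (S ∩ Tᶜ) ∧ IsThin G c n (Sᶜ ∩ T) := by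
  have hPfin : (cutEdges G (S ∩ Tᶜ)).Finite :=
    (hSfin.union hTfin).subset (cutEdges_corner_subset G S T)
  have hQfin : (cutEdges G (Sᶜ ∩ T)).Finite :=
    (hSfin.union hTfin).subset (cutEdges_corner_subset' G S T)
  have hPQ : Sᶜ ∩ T ⊆ (S ∩ Tᶜ)ᶜ := by
    intro x hx
    simp only [Set.mem_inter_iff, Set.mem_compl_iff] at *
    tauto
  have hQP : S ∩ Tᶜ ⊆ (Sᶜ ∩ T)ᶜ := by
    intro x hx
    simp only [Set.mem_inter_iff, Set.mem_compl_iff] at *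
    tauto
  have hPcut : IsCut G (S ∩ Tᶜ) := by
    refine ⟨hPne.ne_empty, ?_, hPfin⟩
    intro h
    obtain ⟨x, hx⟩ := hQne
    have := hPQ hx
    rw [h] at this
    simp at this
  have hQcut : IsCut G (Sᶜ ∩ T) := by
    refine ⟨hQne.ne_empty, ?_, hQfin⟩
    intro h
    obtain ⟨x, hx⟩ := hPne
    have := hQP hx
    rw [h] at this
    simp at this
  have hPge : m ≤ cutCap G c (S ∩ Tᶜ) := by
    by_contra h
    push_neg at h
    exact hP (BoolGen.base ⟨hPcut, by omega⟩)
  have hQge : n ≤ cutCap G c (Sᶜ ∩ T) := by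
    by_contra h
    push_neg at h
    exact hQ (BoolGen.base ⟨hQcut, by omega⟩)
  have hsum := cutCap_submod G c S T hSfin hTfin
  rw [hScap, hTcap] at hsum
  exact ⟨⟨hPcut, by omega, hP⟩, ⟨hQcut, by omega, hQ⟩⟩

lemma Nested_symm {A B : Set V} (h : Nested A B) : Nested B A := by
  rcases h with h | h | h | h
  · exact Or.inl (by rw [Set.inter_comm]; exact h)
  · exact Or.inr (Or.inr (Or.inl (by rw [Set.inter_comm]; exact h)))
  · exact Or.inr (Or.inl (by rw [Set.inter_comm]; exact h))
  · exact Or.inr (Or.inr (Or.inr (by rw [Set.inter_comm]; exact h)))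

lemma thin_crossing_aux (G : SimpleGraph V) (c : Sym2 V → ℕ)
    (m n : ℕ) (hmn : m ≤ n) (A B : Set V)
    (hA : IsThin G c m A) (hB : IsThin G c n B) (hAB : ¬ Nested A B) :
    ∃ A' ∈ ({A, Aᶜ} : Set (Set V)), ∃ B' ∈ ({B, Bᶜ} : Set (Set V)),
      IsThin G c m (A' ∩ B'ᶜ) ∧ IsThin G c n (A'ᶜ ∩ B') := by
  obtain ⟨⟨hAne, hAnu, hAfin⟩, hAcap, hAm⟩ := hA
  obtain ⟨⟨hBne, hBnu, hBfin⟩, hBcap, hBn⟩ := hB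
  rw [Nested] at hAB
  push_neg at hAB
  obtain ⟨e1, e2, e3, e4⟩ := hAB
  have hAfin' : (cutEdges G Aᶜ).Finite := by rwa [cutEdges_compl]
  have hBfin' : (cutEdges G Bᶜ).Finite := by rwa [cutEdges_compl]
  have hAcap' : cutCap G c Aᶜ = m := by rwa [cutCap_compl]
  have hBcap' : cutCap G c Bᶜ = n := by rwa [cutCap_compl]
  set Fm : Set (Set V) := {C | IsCut G C ∧ cutCap G c C ≤ m - 1} with hFm
  set Fn : Set (Set V) := {C | IsCut G C ∧ cutCap G c C ≤ n - 1} with hFn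
  have hsub : ∀ X : Set V, BoolGen Fm X → BoolGen Fn X := by
    intro X hX
    induction hX with
    | base h => exact BoolGen.base ⟨h.1, by have := h.2; omega⟩
    | empty => exact BoolGen.empty
    | univ => exact BoolGen.univ
    | union _ _ ih1 ih2 => exact BoolGen.union ih1 ih2
    | inter _ _ ih1 ih2 => exact BoolGen.inter ih1 ih2
    | compl _ ih => exact BoolGen.compl ih
  have hAm' : ¬ BoolGen Fm Aᶜ := fun h => hAm (by simpa using h.compl)
  have hBn' : ¬ BoolGen Fn Bᶜ := fun h => hBn (by simpa using h.compl)
  have u1 : (A ∩ B) ∪ (A ∩ Bᶜ) = A := Set.inter_union_compl A B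
  have u2 : (Aᶜ ∩ B) ∪ (Aᶜ ∩ Bᶜ) = Aᶜ := Set.inter_union_compl Aᶜ B
  have u3 : (A ∩ B) ∪ (Aᶜ ∩ B) = B := by
    ext x; simp only [Set.mem_union, Set.mem_inter_iff, Set.mem_compl_iff]; tauto
  have u4 : (A ∩ Bᶜ) ∪ (Aᶜ ∩ Bᶜ) = Bᶜ := by
    ext x; simp only [Set.mem_union, Set.mem_inter_iff, Set.mem_compl_iff]; tauto
  have d1 : ¬ BoolGen Fm (A ∩ B) ∨ ¬ BoolGen Fm (A ∩ Bᶜ) := by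
    by_contra h
    push_neg at h
    exact hAm (u1 ▸ h.1.union h.2)
  have d2 : ¬ BoolGen Fm (Aᶜ ∩ B) ∨ ¬ BoolGen Fm (Aᶜ ∩ Bᶜ) := by
    by_contra h
    push_neg at h
    exact hAm' (u2 ▸ h.1.union h.2)
  have d3 : ¬ BoolGen Fn (A ∩ B) ∨ ¬ BoolGen Fn (Aᶜ ∩ B) := by
    by_contra h
    push_neg at h
    exact hBn (u3 ▸ h.1.union h.2)
  have d4 : ¬ BoolGen Fn (A ∩ Bᶜ) ∨ ¬ BoolGen Fn (Aᶜ ∩ Bᶜ) := by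
    by_contra h
    push_neg at h
    exact hBn' (u4 ▸ h.1.union h.2)
  rcases d3 with Hn1 | Hn3
  · rcases d2 with Hm3 | Hm4
    · rcases d4 with Hn2 | Hn4
      · -- pair (Aᶜ∩B m-thin, A∩Bᶜ n-thin): S = Aᶜ, T = Bᶜ
        refine ⟨Aᶜ, by simp, Bᶜ, by simp, ?_⟩
        exact key_pair G c m n Aᶜ Bᶜ hAfin' hBfin' hAcap' hBcap'
          (by rwa [compl_compl]) (by rwa [compl_compl])
          (by rwa [compl_compl]) (by rwa [compl_compl])
      · -- pair (A∩B m-thin, Aᶜ∩Bᶜ n-thin): S = A, T = Bᶜ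
        have Hm1 : ¬ BoolGen Fm (A ∩ B) := fun h => Hn1 (hsub _ h)
        refine ⟨A, by simp, Bᶜ, by simp, ?_⟩
        exact key_pair G c m n A Bᶜ hAfin hBfin' hAcap hBcap'
          (by rwa [compl_compl]) e4 (by rwa [compl_compl]) Hn4
    · -- pair (Aᶜ∩Bᶜ m-thin, A∩B n-thin): S = Aᶜ, T = B
      refine ⟨Aᶜ, by simp, B, by simp, ?_⟩
      exact key_pair G c m n Aᶜ B hAfin' hBfin hAcap' hBcap
        e4 (by rwa [compl_compl]) Hm4 (by rwa [compl_compl])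
  · rcases d1 with Hm1 | Hm2
    · rcases d4 with Hn2 | Hn4
      · -- pair (Aᶜ∩B m-thin, A∩Bᶜ n-thin): S = Aᶜ, T = Bᶜ
        have Hm3 : ¬ BoolGen Fm (Aᶜ ∩ B) := fun h => Hn3 (hsub _ h)
        refine ⟨Aᶜ, by simp, Bᶜ, by simp, ?_⟩
        exact key_pair G c m n Aᶜ Bᶜ hAfin' hBfin' hAcap' hBcap'
          (by rwa [compl_compl]) (by rwa [compl_compl])
          (by rwa [compl_compl]) (by rwa [compl_compl])
      · -- pair (A∩B m-thin, Aᶜ∩Bᶜ n-thin): S = A, T = Bᶜ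
        refine ⟨A, by simp, Bᶜ, by simp, ?_⟩
        exact key_pair G c m n A Bᶜ hAfin hBfin' hAcap hBcap'
          (by rwa [compl_compl]) e4 (by rwa [compl_compl]) Hn4
    · -- pair (A∩Bᶜ m-thin, Aᶜ∩B n-thin): S = A, T = B
      exact ⟨A, by simp, B, by simp,
        key_pair G c m n A B hAfin hBfin hAcap hBcap e2 e3 Hm2 Hn3⟩

end Key

/-- If `A` is an `m`-thin cut and `B` an `n`-thin cut which are not nested, then after
replacing `A` by `Aᶜ` and/or `B` by `Bᶜ` if necessary, `A ∩ Bᶜ` is `m`-thin and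
`Aᶜ ∩ B` is `n`-thin. -/
theorem thin_crossing {V : Type*} (G : SimpleGraph V) (hG : G.Connected)
    (c : Sym2 V → ℕ) (hc : ∀ e ∈ G.edgeSet, 0 < c e)
    (m n : ℕ) (A B : Set V)
    (hA : IsThin G c m A) (hB : IsThin G c n B) (hAB : ¬ Nested A B) :
    ∃ A' ∈ ({A, Aᶜ} : Set (Set V)), ∃ B' ∈ ({B, Bᶜ} : Set (Set V)),
      IsThin G c m (A' ∩ B'ᶜ) ∧ IsThin G c n (A'ᶜ ∩ B') := by
  rcases le_total m n with hmn | hmn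
  · exact thin_crossing_aux G c m n hmn A B hA hB hAB
  · obtain ⟨B', hB', A', hA', h1, h2⟩ :=
      thin_crossing_aux G c n m hmn B A hB hA (fun h => hAB (Nested_symm h))
    exact ⟨A', hA', B', hB', by rwa [Set.inter_comm] at h2, by rwa [Set.inter_comm] at h1⟩
end

section
/- Let X be a connected simple graph, let e be an edge of X, and let k ≥ 1. Then there are only finitely many tight cuts A with |δA| = k and e ∈ δA. -/
open Classical

/-- A tight cut: both the subgraph induced on `A` and that induced on `Aᶜ` are connected. -/
def IsTight {V : Type*} (G : SimpleGraph V) (A : Set V) : Prop :=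
  IsCut G A ∧ (G.induce A).Connected ∧ (G.induce Aᶜ).Connected

namespace TightCutAux

open SimpleGraph

variable {V : Type*}

lemma cutEdges_endpoints {G : SimpleGraph V} {A : Set V} {a b : V}
    (h : s(a, b) ∈ cutEdges G A) : (a ∈ A ∧ b ∉ A) ∨ (b ∈ A ∧ a ∉ A) := by
  obtain ⟨-, u, v, huv, hu, hv⟩ := h
  rw [Sym2.eq_iff] at huv
  rcases huv with ⟨rfl, rfl⟩ | ⟨rfl, rfl⟩
  · exact Or.inl ⟨hu, hv⟩
  · exact Or.inr ⟨hu, hv⟩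

lemma induce_reach_delete {G : SimpleGraph V} {B : Set V} {T : Set (Sym2 V)}
    (hT : ∀ a b : V, a ∈ B → b ∈ B → s(a, b) ∉ T) {x y : ↥B}
    (h : (G.induce B).Reachable x y) : (G.deleteEdges T).Reachable (x : V) (y : V) := by
  obtain ⟨p⟩ := h
  induction p with
  | nil => exact Reachable.refl _
  | cons h' p ih =>
    refine Reachable.trans (Adj.reachable ?_) ih
    rw [deleteEdges_adj]
    exact ⟨h', hT _ _ (Subtype.mem _) (Subtype.mem _)⟩

/-- a walk in `G` minus the cut edges of `A` starting in `A` stays in `A`. -/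
lemma walk_stays {G : SimpleGraph V} {A : Set V} {a b : V}
    (h : (G.deleteEdges (cutEdges G A)).Reachable a b) : a ∈ A → b ∈ A := by
  obtain ⟨p⟩ := h
  induction p with
  | nil => exact id
  | cons h' p ih =>
    intro ha
    rw [deleteEdges_adj] at h'
    apply ih
    by_contra hc
    exact h'.2 ⟨(G.mem_edgeSet).mpr h'.1, _, _, rfl, ha, hc⟩

lemma side_eq_reachSet {G : SimpleGraph V} {A : Set V} (hc : (G.induce A).Connected)
    {w₀ : V} (hw : w₀ ∈ A) :
    A = {w | (G.deleteEdges (cutEdges G A)).Reachable w₀ w} := by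
  ext w
  constructor
  · intro hwA
    have hr : (G.induce A).Reachable ⟨w₀, hw⟩ ⟨w, hwA⟩ := hc.preconnected _ _
    exact induce_reach_delete (fun a b ha hb hmem => by
      rcases cutEdges_endpoints hmem with ⟨_, h2⟩ | ⟨_, h2⟩
      · exact h2 hb
      · exact h2 ha) hr
  · intro hr
    exact walk_stays hr hw

lemma tight_min_cut {G : SimpleGraph V} {A : Set V} (hA : (G.induce A).Connected)
    (hA' : (G.induce Aᶜ).Connected) {x y : V} (hx : x ∈ A) (hy : y ∉ A) :
    ¬(G.deleteEdges (cutEdges G A)).Reachable x y ∧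
      ∀ T ⊂ cutEdges G A, (G.deleteEdges T).Reachable x y := by
  constructor
  · intro hr
    exact hy (walk_stays hr hx)
  · intro T hT
    obtain ⟨f, hfS, hfT⟩ := Set.exists_of_ssubset hT
    obtain ⟨hfE, a, b, rfl, haA, hbA⟩ := hfS
    have hTsub : T ⊆ cutEdges G A := hT.subset
    have h1 : (G.deleteEdges T).Reachable x a := by
      have hr : (G.induce A).Reachable ⟨x, hx⟩ ⟨a, haA⟩ := hA.preconnected _ _
      exact induce_reach_delete (fun c d hc hd hmem => by
        rcases cutEdges_endpoints (hTsub hmem) with ⟨_, h2⟩ | ⟨_, h2⟩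
        · exact h2 hd
        · exact h2 hc) hr
    have h2 : (G.deleteEdges T).Reachable a b := by
      refine Adj.reachable ?_
      rw [deleteEdges_adj]
      exact ⟨hfE, hfT⟩
    have h3 : (G.deleteEdges T).Reachable b y := by
      have hr : (G.induce Aᶜ).Reachable ⟨b, hbA⟩ ⟨y, hy⟩ := hA'.preconnected _ _
      exact induce_reach_delete (fun c d hc hd hmem => by
        rcases cutEdges_endpoints (hTsub hmem) with ⟨h1', _⟩ | ⟨h1', _⟩
        · exact hc h1'
        · exact hd h1') hr
    exact (h1.trans h2).trans h3

/-- Finiteness of the set of minimal `u`-`v` edge cuts of size at most `m`. -/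
lemma finite_minimal_cuts : ∀ (m : ℕ) (G : SimpleGraph V) (u v : V),
    {S : Set (Sym2 V) | S.Finite ∧ S.ncard ≤ m ∧ ¬(G.deleteEdges S).Reachable u v ∧
      ∀ T ⊂ S, (G.deleteEdges T).Reachable u v}.Finite := by
  intro m
  induction m with
  | zero =>
    intro G u v
    apply Set.Finite.subset (Set.finite_singleton (∅ : Set (Sym2 V)))
    rintro S ⟨hfin, hcard, -, -⟩
    exact (Set.ncard_eq_zero hfin).mp (Nat.le_zero.mp hcard)
  | succ m ih =>
    intro G u v
    by_cases hr : G.Reachable u v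
    · obtain ⟨p⟩ := hr
      apply Set.Finite.subset
        (Set.Finite.biUnion (p.edges.finite_toSet)
          (fun f _ => ((ih (G.deleteEdges {f}) u v).image (insert f))))
      rintro S ⟨hfin, hcard, hdis, hmin⟩
      have hS0 : S ≠ ∅ := by
        rintro rfl
        rw [SimpleGraph.deleteEdges_empty] at hdis
        exact hdis ⟨p⟩
      have hex : ∃ f ∈ p.edges, f ∈ S := by
        by_contra hno
        push_neg at hno
        exact hdis ⟨p.toDeleteEdges S hno⟩
      obtain ⟨f, hfp, hfS⟩ := hex
      rw [Set.mem_iUnion]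
      refine ⟨f, ?_⟩
      rw [Set.mem_iUnion]
      refine ⟨hfp, ⟨S \ {f}, ⟨hfin.diff, ?_, ?_, ?_⟩, ?_⟩⟩
      · have := Set.ncard_diff_singleton_add_one hfS hfin
        omega
      · rw [SimpleGraph.deleteEdges_deleteEdges]
        rwa [Set.union_diff_cancel (by simpa using hfS)]
      · intro T hT
        have h1 : insert f T ⊂ S := by
          constructor
          · exact Set.insert_subset hfS (hT.subset.trans Set.diff_subset)
          · intro hSsub
            obtain ⟨x, hxS, hxT⟩ := Set.exists_of_ssubset hT
            rcases hSsub hxS.1 with h | h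
            · exact hxS.2 h
            · exact hxT h
        have := hmin _ h1
        rw [SimpleGraph.deleteEdges_deleteEdges]
        rw [← Set.insert_eq]
        exact this
      · rw [Set.insert_diff_singleton, Set.insert_eq_of_mem hfS]
    · apply Set.Finite.subset (Set.finite_singleton (∅ : Set (Sym2 V)))
      rintro S ⟨-, -, -, hmin⟩
      by_contra hS0
      have : (∅ : Set (Sym2 V)) ⊂ S :=
        Set.empty_ssubset.mpr (Set.nonempty_iff_ne_empty.mpr (by simpa using hS0))
      have := hmin ∅ this
      rw [SimpleGraph.deleteEdges_empty] at this
      exact hr this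

end TightCutAux

/-- For every edge `e` and every `k ≥ 1` there are only finitely many tight cuts `A`
with `|δA| = k` and `e ∈ δA`. -/
theorem finitely_many_tight_cuts {V : Type*} (G : SimpleGraph V) (hG : G.Connected)
    (e : Sym2 V) (he : e ∈ G.edgeSet) (k : ℕ) (hk : 1 ≤ k) :
    {A : Set V | IsTight G A ∧ (cutEdges G A).ncard = k ∧ e ∈ cutEdges G A}.Finite := by
  clear hG hk
  induction e using Sym2.ind with
  | _ u₀ v₀ =>
  classical
  set M : Set (Set (Sym2 V)) :=
    {S : Set (Sym2 V) | S.Finite ∧ S.ncard ≤ k ∧ ¬(G.deleteEdges S).Reachable u₀ v₀ ∧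
      ∀ T ⊂ S, (G.deleteEdges T).Reachable u₀ v₀} with hM
  have hMfin : M.Finite := TightCutAux.finite_minimal_cuts k G u₀ v₀
  apply Set.Finite.subset
    (hMfin.biUnion (fun S _ =>
      (Set.finite_singleton {w | (G.deleteEdges S).Reachable v₀ w}).insert
        {w | (G.deleteEdges S).Reachable u₀ w}))
  rintro A ⟨⟨⟨-, -, hfin⟩, hcA, hcAc⟩, hcard, heA⟩
  have hside : (u₀ ∈ A ∧ v₀ ∉ A) ∨ (v₀ ∈ A ∧ u₀ ∉ A) := TightCutAux.cutEdges_endpoints heA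
  rw [Set.mem_iUnion]
  rcases hside with ⟨hu, hv⟩ | ⟨hv, hu⟩
  · obtain ⟨hdis, hmin⟩ := TightCutAux.tight_min_cut hcA hcAc hu hv
    refine ⟨cutEdges G A, ?_⟩
    rw [Set.mem_iUnion]
    refine ⟨⟨hfin, by rw [hcard], hdis, hmin⟩, ?_⟩
    left
    exact TightCutAux.side_eq_reachSet hcA hu
  · obtain ⟨hdis, hmin⟩ := TightCutAux.tight_min_cut hcA hcAc hv hu
    refine ⟨cutEdges G A, ?_⟩
    rw [Set.mem_iUnion]
    refine ⟨⟨hfin, by rw [hcard], fun h => hdis h.symm, fun T hT => (hmin T hT).symm⟩, ?_⟩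
    right
    rw [Set.mem_singleton_iff]
    exact TightCutAux.side_eq_reachSet hcA hv
end

section
/- Let X be a connected simple graph with capacity function c assigning a positive integer to each edge, let n ≥ 1, and let C ⊆ D be subsets of the vertex set with C ≠ ∅, D not equal to the whole vertex set, and δC and δD finite. Then the set of tight cuts E with c(E) ≤ n and C ⊆ E ⊆ D is finite. -/
open Classical

lemma cutEdges_deleteEdges {V : Type*} (G : SimpleGraph V) (s : Set (Sym2 V)) (A : Set V) :
    cutEdges (G.deleteEdges s) A = cutEdges G A \ s := by
  ext e
  simp only [cutEdges, Set.mem_setOf_eq, SimpleGraph.edgeSet_deleteEdges, Set.mem_diff]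
  tauto

lemma induce_deleteEdges_eq {V : Type*} (G : SimpleGraph V) (x y : V) (E : Set V)
    (hx : x ∈ E) (hy : y ∉ E) :
    (G.deleteEdges {s(x, y)}).induce E = G.induce E := by
  ext ⟨u, hu⟩ ⟨v, hv⟩
  simp only [SimpleGraph.comap_adj, Function.Embedding.coe_subtype,
    SimpleGraph.deleteEdges_adj, Set.mem_singleton_iff]
  constructor
  · exact fun h => h.1
  · intro h
    refine ⟨h, fun hh => ?_⟩
    rw [Sym2.eq_iff] at hh
    rcases hh with ⟨rfl, rfl⟩ | ⟨rfl, rfl⟩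
    · exact hy hv
    · exact hy hu

lemma cutCap_delete {V : Type*} (G : SimpleGraph V) (c : Sym2 V → ℕ) (e : Sym2 V) (E : Set V)
    (hfin : (cutEdges G E).Finite) (he : e ∈ cutEdges G E) :
    cutCap G c E = cutCap (G.deleteEdges {e}) c E + c e := by
  rw [cutCap, cutCap, cutEdges_deleteEdges,
    finsum_mem_eq_finite_toFinset_sum _ hfin, finsum_mem_eq_finite_toFinset_sum _ (hfin.diff (t := {e}))]
  have h1 : (hfin.diff (t := {e})).toFinset = hfin.toFinset.erase e := by
    ext a; simp [Set.Finite.mem_toFinset, and_comm]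
  rw [h1]
  exact (Finset.sum_erase_add _ _ (hfin.mem_toFinset.mpr he)).symm

lemma precon_delete {V : Type*} (G : SimpleGraph V) (hG : G.Preconnected) (x y : V)
    (h : (G.deleteEdges {s(x, y)}).Reachable x y) :
    (G.deleteEdges {s(x, y)}).Preconnected := by
  have step : ∀ a b : V, G.Adj a b → (G.deleteEdges {s(x, y)}).Reachable a b := by
    intro a b hab
    by_cases hc : s(a, b) = s(x, y)
    · rw [Sym2.eq_iff] at hc
      rcases hc with ⟨rfl, rfl⟩ | ⟨rfl, rfl⟩
      · exact h
      · exact h.symm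
    · exact SimpleGraph.Adj.reachable (by simp [SimpleGraph.deleteEdges_adj, hab, hc])
  intro u v
  obtain ⟨w⟩ := hG u v
  induction w with
  | nil => exact SimpleGraph.Reachable.refl _
  | cons ha p ih => exact (step _ _ ha).trans ih

theorem tight_cuts_aux {V : Type*} : ∀ (n : ℕ) (G : SimpleGraph V), G.Connected →
    ∀ (c : Sym2 V → ℕ), (∀ e ∈ G.edgeSet, 0 < c e) →
    ∀ (C D : Set V), C ≠ ∅ → D ≠ Set.univ →
    {E : Set V | IsTight G E ∧ cutCap G c E ≤ n ∧ C ⊆ E ∧ E ⊆ D}.Finite := by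
  intro n
  induction n using Nat.strong_induction_on with
  | _ n ih =>
  intro G hG c hc C D hC hD
  obtain ⟨v₀, hv₀⟩ := Set.nonempty_iff_ne_empty.mpr hC
  obtain ⟨w₀, hw₀⟩ : ∃ w, w ∉ D := by
    by_contra h; push_neg at h; exact hD (Set.eq_univ_iff_forall.mpr h)
  obtain ⟨W⟩ := hG.preconnected v₀ w₀
  have cover : {E : Set V | IsTight G E ∧ cutCap G c E ≤ n ∧ C ⊆ E ∧ E ⊆ D} ⊆
      ⋃ d ∈ {d | d ∈ W.darts},
        {E : Set V | IsTight G E ∧ cutCap G c E ≤ n ∧ C ⊆ E ∧ E ⊆ D ∧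
          d.fst ∈ E ∧ d.snd ∉ E} := by
    intro E hE
    obtain ⟨hT, hcap, hCE, hED⟩ := hE
    obtain ⟨d, hd, h1, h2⟩ := W.exists_boundary_dart E (hCE hv₀) (fun h => hw₀ (hED h))
    exact Set.mem_biUnion hd ⟨hT, hcap, hCE, hED, h1, h2⟩
  refine Set.Finite.subset (Set.Finite.biUnion (W.darts.finite_toSet) ?_) cover
  intro d _
  obtain ⟨⟨x, y⟩, hxy⟩ := d
  simp only at *
  set e : Sym2 V := s(x, y) with he_def
  set G' := G.deleteEdges {e} with hG'_def
  have heE : e ∈ G.edgeSet := (SimpleGraph.mem_edgeSet G).mpr hxy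
  -- Common facts for any E in the set
  have key : ∀ E : Set V, IsTight G E → cutCap G c E ≤ n → x ∈ E → y ∉ E →
      (e ∈ cutEdges G E) ∧ IsTight G' E ∧ cutCap G' c E + c e ≤ n := by
    intro E hT hcap hxE hyE
    have hmem : e ∈ cutEdges G E := ⟨heE, x, y, rfl, hxE, hyE⟩
    have hfE : (cutEdges G E).Finite := hT.1.2.2
    have hconnE : (G'.induce E).Connected := by
      rw [hG'_def, he_def, induce_deleteEdges_eq G x y E hxE hyE]
      exact hT.2.1
    have hconnEc : (G'.induce Eᶜ).Connected := by
      have hswap : G' = G.deleteEdges {s(y, x)} := by rw [hG'_def, he_def, Sym2.eq_swap]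
      rw [hswap, induce_deleteEdges_eq G y x Eᶜ hyE (fun h => h hxE)]
      exact hT.2.2
    refine ⟨hmem, ⟨⟨hT.1.1, hT.1.2.1, ?_⟩, hconnE, hconnEc⟩, ?_⟩
    · rw [hG'_def, cutEdges_deleteEdges]; exact hfE.diff
    · rw [← cutCap_delete G c e E hfE hmem]; exact hcap
  by_cases hr : G'.Reachable x y
  · -- delete the edge; the graph stays connected, capacity drops
    rcases Set.eq_empty_or_nonempty {E : Set V | IsTight G E ∧ cutCap G c E ≤ n ∧
        C ⊆ E ∧ E ⊆ D ∧ x ∈ E ∧ y ∉ E} with hemp | ⟨E₀, hE₀⟩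
    · rw [hemp]; exact Set.finite_empty
    · have hce : 1 ≤ c e := hc e heE
      obtain ⟨hT₀, hcap₀, _, _, hx₀, hy₀⟩ := hE₀
      obtain ⟨_, _, hcap₀'⟩ := key E₀ hT₀ hcap₀ hx₀ hy₀
      have hn1 : 1 ≤ n := le_trans hce (le_trans (Nat.le_add_left _ _) hcap₀')
      have hne : Nonempty V := hG.nonempty
      have hG'conn : G'.Connected := SimpleGraph.Connected.mk (precon_delete G hG.preconnected x y hr)
      have hc' : ∀ f ∈ G'.edgeSet, 0 < c f := by
        intro f hf
        rw [hG'_def, SimpleGraph.edgeSet_deleteEdges] at hf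
        exact hc f hf.1
      refine Set.Finite.subset
        (ih (n - 1) (Nat.sub_lt hn1 one_pos) G' hG'conn c hc' C D hC hD) ?_
      intro E hE
      obtain ⟨hT, hcap, hCE, hED, hxE, hyE⟩ := hE
      obtain ⟨_, hT', hcap'⟩ := key E hT hcap hxE hyE
      refine ⟨hT', ?_, hCE, hED⟩
      exact Nat.le_sub_of_add_le (le_trans (add_le_add_right hce _) hcap')
  · -- the cut is uniquely determined
    refine Set.Finite.subset (Set.finite_singleton {v | G'.Reachable x v}) ?_
    intro E hE
    obtain ⟨hT, hcap, hCE, hED, hxE, hyE⟩ := hE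
    obtain ⟨_, hT', _⟩ := key E hT hcap hxE hyE
    have hconnE := hT'.2.1
    have hconnEc := hT'.2.2
    simp only [Set.mem_singleton_iff]
    ext v
    simp only [Set.mem_setOf_eq]
    constructor
    · intro hv
      exact (hconnE.preconnected ⟨x, hxE⟩ ⟨v, hv⟩).map (SimpleGraph.Embedding.induce E).toHom
    · intro hv
      by_contra hvE
      have r2 := (hconnEc.preconnected ⟨y, hyE⟩ ⟨v, hvE⟩).map
        (SimpleGraph.Embedding.induce Eᶜ).toHom
      exact hr (hv.trans r2.symm)

/-- The finite interval condition: if `C ⊆ D`, `C ≠ ∅`, `D ≠ univ` and both have finite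
edge boundary, then there are only finitely many tight cuts `E` of capacity at most `n`
with `C ⊆ E ⊆ D`. -/
theorem finitely_many_tight_cuts_between {V : Type*} (G : SimpleGraph V) (hG : G.Connected)
    (c : Sym2 V → ℕ) (hc : ∀ e ∈ G.edgeSet, 0 < c e) (n : ℕ) (hn : 1 ≤ n)
    (C D : Set V) (hCD : C ⊆ D) (hC : C ≠ ∅) (hD : D ≠ Set.univ)
    (hfC : (cutEdges G C).Finite) (hfD : (cutEdges G D).Finite) :
    {E : Set V | IsTight G E ∧ cutCap G c E ≤ n ∧ C ⊆ E ∧ E ⊆ D}.Finite :=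
  tight_cuts_aux n G hG c hc C D hC hD
end
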